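/- For every z ∈ Z(U(sl₂)) and every n ≥ 1, the following identities hold in H_z: [Δⁿ, x] = (f_n(Δ)·h + g_n(Δ))·x + 2·f_n(Δ)·e·y, and [Δⁿ, y] = 2·f_n(Δ)·f·x + (g_n(Δ) − f_n(Δ)·h)·y. -/

import Mathlib

open Polynomial

inductive HGen : Type | E | F | H | X | Y

noncomputable section

namespace InfHecke

variable (k : Type) [Field k]

abbrev FA := FreeAlgebra k HGen

def fe : FA k := FreeAlgebra.ι k HGen.E
def ff : FA k := FreeAlgebra.ι k HGen.F
def fh : FA k := FreeAlgebra.ι k HGen.H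
def fx : FA k := FreeAlgebra.ι k HGen.X
def fy : FA k := FreeAlgebra.ι k HGen.Y

/-- (a multiple of) the Casimir element, in the free algebra. -/
def fΔ : FA k := fh k * fh k + 4 * (fe k * ff k) - 2 * fh k

/-- The defining relations of the infinitesimal Hecke algebra `H_z` of `sl₂`,
with deformation parameter `z = p(Δ)` for a polynomial `p`. -/
inductive Rel (p : Polynomial k) : FA k → FA k → Prop
  | he : Rel p (fh k * fe k - fe k * fh k) (2 * fe k)
  | hf : Rel p (fh k * ff k - ff k * fh k) (-(2 * ff k))
  | ef : Rel p (fe k * ff k - ff k * fe k) (fh k)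
  | ex : Rel p (fe k * fx k - fx k * fe k) 0
  | ey : Rel p (fe k * fy k - fy k * fe k) (fx k)
  | fxr : Rel p (ff k * fx k - fx k * ff k) (fy k)
  | fyr : Rel p (ff k * fy k - fy k * ff k) 0
  | hx : Rel p (fh k * fx k - fx k * fh k) (fx k)
  | hy : Rel p (fh k * fy k - fy k * fh k) (-(fy k))
  | xy : Rel p (fx k * fy k - fy k * fx k) (Polynomial.aeval (fΔ k) p)

/-- The infinitesimal Hecke algebra `H_z` of `sl₂`, with `z = p(Δ)`. -/
abbrev Hecke (p : Polynomial k) := RingQuot (Rel k p)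

variable (p : Polynomial k)

def eH : Hecke k p := (RingQuot.mkAlgHom k (Rel k p)) (fe k)
def fH : Hecke k p := (RingQuot.mkAlgHom k (Rel k p)) (ff k)
def hH : Hecke k p := (RingQuot.mkAlgHom k (Rel k p)) (fh k)
def xH : Hecke k p := (RingQuot.mkAlgHom k (Rel k p)) (fx k)
def yH : Hecke k p := (RingQuot.mkAlgHom k (Rel k p)) (fy k)

/-- The Casimir element `Δ = h² + 4ef − 2h` in `H_z`. -/
def ΔH : Hecke k p := (RingQuot.mkAlgHom k (Rel k p)) (fΔ k)

/-- The deformation parameter `z = p(Δ)`, as an element of `H_z`. -/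
def zH : Hecke k p := Polynomial.aeval (ΔH k p) p

/-- The element `t = ey² + hxy − fx²`. -/
def tH : Hecke k p := eH k p * yH k p ^ 2 + hH k p * xH k p * yH k p - fH k p * xH k p ^ 2

/-- The polynomial representing `q_z = (1/4)(z − Δz − z₀)`, where `z₀ = p0(Δ)`. -/
def qpoly (p0 : Polynomial k) : Polynomial k :=
  Polynomial.C (1/4 : k) * (p - Polynomial.X * p - p0)

/-- The condition that `z₀ = p0(Δ)` satisfies `[z₀, x] = Δxz − zxΔ` in `H_z`. -/
def IsZ0 (p0 : Polynomial k) : Prop :=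
  Polynomial.aeval (ΔH k p) p0 * xH k p - xH k p * Polynomial.aeval (ΔH k p) p0
    = ΔH k p * xH k p * zH k p - zH k p * xH k p * ΔH k p

/-- The central element `t_z = t − (1/2)hz − q_z` of `H_z`. -/
def tz (p0 : Polynomial k) : Hecke k p :=
  tH k p - (1/2 : k) • (hH k p * zH k p) - Polynomial.aeval (ΔH k p) (qpoly k p p0)

/-- The polynomial `φ_z(s) = ((1/2)s + 1)·z(s²+2s) − q_z(s²+2s)`. -/
def phiz (p0 : Polynomial k) : Polynomial k :=
  (Polynomial.C (1/2 : k) * Polynomial.X + 1) * p.comp (Polynomial.X ^ 2 + 2 * Polynomial.X)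
    - (qpoly k p p0).comp (Polynomial.X ^ 2 + 2 * Polynomial.X)

/-- The left ideal of `H_z` generated by `e`, `x` and `h − λ`. -/
def VermaIdeal (lam : k) : Ideal (Hecke k p) :=
  Ideal.span {eH k p, xH k p, hH k p - algebraMap k (Hecke k p) lam}

/-- The Verma module `M(λ)` over `H_z`. -/
abbrev Verma (lam : k) := Hecke k p ⧸ VermaIdeal k p lam

/-- The (unique) maximal proper submodule of the Verma module `M(λ)`. -/
def VermaRad (lam : k) : Submodule (Hecke k p) (Verma k p lam) :=
  sSup {N : Submodule (Hecke k p) (Verma k p lam) | N ≠ ⊤}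

/-- The simple highest-weight module `V(λ)`, the irreducible quotient of `M(λ)`. -/
abbrev SimpleQuot (lam : k) := Verma k p lam ⧸ VermaRad k p lam

/-- The `k`-linear span of all commutators `ab − ba` in `H_z`. -/
def commSpace : Submodule k (Hecke k p) :=
  Submodule.span k {c : Hecke k p | ∃ a b : Hecke k p, c = a * b - b * a}

/-- The polynomials `f_n` (for `n ≥ 1`), defined together with `g_n` by the mutual
recursion `f₁ = 2`, `g₁ = −3`, `f_{n+1} = 2Tⁿ + (T−1)f_n − 2g_n`,
`g_{n+1} = −3Tⁿ + (T+3)g_n − 2T·f_n`. -/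
def fgAux : ℕ → Polynomial k × Polynomial k
  | 0 => (Polynomial.C 2, Polynomial.C (-3))
  | n + 1 =>
      ((2 : Polynomial k) * Polynomial.X ^ (n + 1)
          + (Polynomial.X - 1) * (fgAux n).1 - 2 * (fgAux n).2,
        (-3 : Polynomial k) * Polynomial.X ^ (n + 1)
          + (Polynomial.X + 3) * (fgAux n).2 - 2 * Polynomial.X * (fgAux n).1)

def fP (n : ℕ) : Polynomial k := (fgAux k (n - 1)).1
def gP (n : ℕ) : Polynomial k := (fgAux k (n - 1)).2


section AuxAbstract

theorem mulp {A : Type*} [Ring A] {b a s : A} (hb : b * a = s) (t : A) :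
    b * (a * t) = s * t := by rw [← mul_assoc, hb]

theorem ofSub {A : Type*} [Ring A] {a b c : A} (h : a - b = c) : a = b + c := by
  rw [← h]; noncomm_ring

theorem ofSub' {A : Type*} [Ring A] {a b c : A} (h : a - b = c) : b = a - c := by
  rw [← h]; noncomm_ring

theorem commute_aeval {S A : Type*} [CommSemiring S] [Semiring A] [Algebra S A] {a b : A}
    (h : Commute a b) (q : Polynomial S) : Commute (Polynomial.aeval a q) b := by
  induction q using Polynomial.induction_on' with
  | add u v hu hv => simpa [map_add] using hu.add_left hv
  | monomial n c =>
      rw [Polynomial.aeval_monomial]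
      exact (show Commute _ b from Algebra.commutes c b).mul_left (h.pow_left n)

variable {A : Type*} [Ring A] {e f h x y : A}

theorem absCommE (he : h*e = e*h + (2:ℤ)•e) (fe : f*e = e*f - h)
    {d : A} (hd : d = h*h + (4:ℤ)•(e*f) - (2:ℤ)•h) : e * d = d * e := by
  subst hd
  noncomm_ring
  simp only [mul_assoc, mul_add, add_mul, mul_sub, sub_mul, smul_mul_assoc, mul_smul_comm,
    smul_add, smul_sub, he, fe, mulp he, mulp fe]
  noncomm_ring

theorem absCommF (hf : h*f = f*h - (2:ℤ)•f) (fe : f*e = e*f - h)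
    {d : A} (hd : d = h*h + (4:ℤ)•(e*f) - (2:ℤ)•h) : f * d = d * f := by
  subst hd
  noncomm_ring
  simp only [mul_assoc, mul_add, add_mul, mul_sub, sub_mul, smul_mul_assoc, mul_smul_comm,
    smul_add, smul_sub, hf, fe, mulp hf, mulp fe]
  noncomm_ring

theorem absCommH (he : h*e = e*h + (2:ℤ)•e) (hf : h*f = f*h - (2:ℤ)•f)
    {d : A} (hd : d = h*h + (4:ℤ)•(e*f) - (2:ℤ)•h) : h * d = d * h := by
  subst hd
  noncomm_ring
  simp only [mul_assoc, mul_add, add_mul, mul_sub, sub_mul, smul_mul_assoc, mul_smul_comm,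
    smul_add, smul_sub, he, hf, mulp he, mulp hf]
  noncomm_ring

theorem absBase (he : h*e = e*h + (2:ℤ)•e) (hf : h*f = f*h - (2:ℤ)•f) (fe : f*e = e*f - h)
    (xe : x*e = e*x) (ye : y*e = e*y - x) (xf : x*f = f*x - y) (yf : y*f = f*y)
    (xh : x*h = h*x - x) (yh : y*h = h*y + y)
    {d : A} (hd : d = h*h + (4:ℤ)•(e*f) - (2:ℤ)•h) :
    d*x - x*d = ((2:A)*h + (-3:A))*x + 2*(2:A)*(e*y) ∧
    d*y - y*d = 2*(2:A)*(f*x) + ((-3:A) - (2:A)*h)*y := by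
  subst hd
  constructor <;>
  · noncomm_ring
    simp only [mul_assoc, mul_add, add_mul, mul_sub, sub_mul, smul_mul_assoc, mul_smul_comm,
      smul_add, smul_sub, he, hf, fe, xe, ye, xf, yf, xh, yh,
      mulp he, mulp hf, mulp fe, mulp xe, mulp ye, mulp xf, mulp yf, mulp xh, mulp yh]
    noncomm_ring

theorem absStep (he : h*e = e*h + (2:ℤ)•e) (hf : h*f = f*h - (2:ℤ)•f) (fe : f*e = e*f - h)
    (xe : x*e = e*x) (ye : y*e = e*y - x) (xf : x*f = f*x - y) (yf : y*f = f*y)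
    (xh : x*h = h*x - x) (yh : y*h = h*y + y)
    {d D F G : A} (hd : d = h*h + (4:ℤ)•(e*f) - (2:ℤ)•h)
    (eD : e*D = D*e) (fD : f*D = D*f) (hD : h*D = D*h)
    (eF : e*F = F*e) (fF : f*F = F*f) (hF : h*F = F*h) (DF : D*F = F*D)
    (eG : e*G = G*e) (fG : f*G = G*f) (hG : h*G = G*h) (DG : D*G = G*D)
    (GF : G*F = F*G)
    (ihx : D*x - x*D = (F*h+G)*x + 2*F*(e*y))
    (ihy : D*y - y*D = 2*F*(f*x) + (G - F*h)*y) :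
    (d*D)*x - x*(d*D)
      = (((2:A)*D + (d-1)*F - 2*G)*h + ((-3:A)*D + (d+3)*G - 2*d*F))*x
        + 2*((2:A)*D + (d-1)*F - 2*G)*(e*y) ∧
    (d*D)*y - y*(d*D)
      = 2*((2:A)*D + (d-1)*F - 2*G)*(f*x)
        + (((-3:A)*D + (d+3)*G - 2*d*F) - ((2:A)*D + (d-1)*F - 2*G)*h)*y := by
  have hxD : x*D = D*x - (F*h+G)*x - (2:ℤ)•(F*(e*y)) := by
    have h1 : x*D = D*x - ((F*h+G)*x + 2*F*(e*y)) := by rw [← ihx]; noncomm_ring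
    rw [h1]; noncomm_ring
  have hyD : y*D = D*y - (2:ℤ)•(F*(f*x)) - (G - F*h)*y := by
    have h1 : y*D = D*y - (2*F*(f*x) + (G - F*h)*y) := by rw [← ihy]; noncomm_ring
    rw [h1]; noncomm_ring
  subst hd
  constructor <;>
  · noncomm_ring
    simp only [mul_assoc, mul_add, add_mul, mul_sub, sub_mul, smul_mul_assoc, mul_smul_comm,
      smul_add, smul_sub, he, hf, fe, xe, ye, xf, yf, xh, yh,
      eD, fD, hD, eF, fF, hF, DF, eG, fG, hG, DG, GF, hxD, hyD,
      mulp he, mulp hf, mulp fe, mulp xe, mulp ye, mulp xf, mulp yf, mulp xh, mulp yh,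
      mulp eD, mulp fD, mulp hD, mulp eF, mulp fF, mulp hF, mulp DF,
      mulp eG, mulp fG, mulp hG, mulp DG, mulp GF, mulp hxD, mulp hyD]
    noncomm_ring

end AuxAbstract

section AuxConcrete

variable {k : Type} [Field k] {p : Polynomial k}

theorem eH_def : RingQuot.mkAlgHom k (Rel k p) (fe k) = eH k p := rfl
theorem fH_def : RingQuot.mkAlgHom k (Rel k p) (ff k) = fH k p := rfl
theorem hH_def : RingQuot.mkAlgHom k (Rel k p) (fh k) = hH k p := rfl
theorem xH_def : RingQuot.mkAlgHom k (Rel k p) (fx k) = xH k p := rfl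
theorem yH_def : RingQuot.mkAlgHom k (Rel k p) (fy k) = yH k p := rfl

theorem relHE : hH k p * eH k p = eH k p * hH k p + (2:ℤ)•(eH k p) := by
  have h0 := RingQuot.mkAlgHom_rel k (Rel.he (k := k) (p := p))
  simp only [map_sub, map_mul, map_ofNat, eH_def, hH_def] at h0
  rw [ofSub h0]; noncomm_ring

theorem relHF : hH k p * fH k p = fH k p * hH k p - (2:ℤ)•(fH k p) := by
  have h0 := RingQuot.mkAlgHom_rel k (Rel.hf (k := k) (p := p))
  simp only [map_sub, map_mul, map_ofNat, map_neg, fH_def, hH_def] at h0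
  rw [ofSub h0]; noncomm_ring

theorem relFE : fH k p * eH k p = eH k p * fH k p - hH k p := by
  have h0 := RingQuot.mkAlgHom_rel k (Rel.ef (k := k) (p := p))
  simp only [map_sub, map_mul, eH_def, fH_def, hH_def] at h0
  exact ofSub' h0

theorem relXE : xH k p * eH k p = eH k p * xH k p := by
  have h0 := RingQuot.mkAlgHom_rel k (Rel.ex (k := k) (p := p))
  simp only [map_sub, map_mul, map_zero, eH_def, xH_def] at h0
  exact (sub_eq_zero.mp h0).symm

theorem relYE : yH k p * eH k p = eH k p * yH k p - xH k p := by
  have h0 := RingQuot.mkAlgHom_rel k (Rel.ey (k := k) (p := p))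
  simp only [map_sub, map_mul, eH_def, xH_def, yH_def] at h0
  exact ofSub' h0

theorem relXF : xH k p * fH k p = fH k p * xH k p - yH k p := by
  have h0 := RingQuot.mkAlgHom_rel k (Rel.fxr (k := k) (p := p))
  simp only [map_sub, map_mul, fH_def, xH_def, yH_def] at h0
  exact ofSub' h0

theorem relYF : yH k p * fH k p = fH k p * yH k p := by
  have h0 := RingQuot.mkAlgHom_rel k (Rel.fyr (k := k) (p := p))
  simp only [map_sub, map_mul, map_zero, fH_def, yH_def] at h0
  exact (sub_eq_zero.mp h0).symm

theorem relXH : xH k p * hH k p = hH k p * xH k p - xH k p := by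
  have h0 := RingQuot.mkAlgHom_rel k (Rel.hx (k := k) (p := p))
  simp only [map_sub, map_mul, hH_def, xH_def] at h0
  exact ofSub' h0

theorem relYH : yH k p * hH k p = hH k p * yH k p + yH k p := by
  have h0 := RingQuot.mkAlgHom_rel k (Rel.hy (k := k) (p := p))
  simp only [map_sub, map_mul, map_neg, hH_def, yH_def] at h0
  rw [ofSub' h0]; noncomm_ring

theorem deltaDef : ΔH k p = hH k p * hH k p + (4:ℤ)•(eH k p * fH k p) - (2:ℤ)•(hH k p) := by
  have h0 : ΔH k p = hH k p * hH k p + 4*(eH k p * fH k p) - 2*(hH k p) := by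
    simp only [ΔH, fΔ, map_sub, map_add, map_mul, map_ofNat, eH_def, fH_def, hH_def]
  rw [h0]; noncomm_ring

theorem commDE : Commute (ΔH k p) (eH k p) :=
  (absCommE relHE relFE (deltaDef (k := k) (p := p))).symm

theorem commDF : Commute (ΔH k p) (fH k p) :=
  (absCommF relHF relFE (deltaDef (k := k) (p := p))).symm

theorem commDH : Commute (ΔH k p) (hH k p) :=
  (absCommH relHE relHF (deltaDef (k := k) (p := p))).symm

theorem fP_succ (n : ℕ) (hn : 1 ≤ n) :
    fP k (n+1) = 2 * Polynomial.X ^ n + (Polynomial.X - 1) * fP k n - 2 * gP k n := by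
  obtain ⟨m, rfl⟩ := Nat.exists_eq_succ_of_ne_zero (by omega : n ≠ 0)
  simp only [fP, gP, Nat.succ_eq_add_one, Nat.add_sub_cancel]
  simp only [fgAux]

theorem gP_succ (n : ℕ) (hn : 1 ≤ n) :
    gP k (n+1) = (-3) * Polynomial.X ^ n + (Polynomial.X + 3) * gP k n
      - 2 * Polynomial.X * fP k n := by
  obtain ⟨m, rfl⟩ := Nat.exists_eq_succ_of_ne_zero (by omega : n ≠ 0)
  simp only [fP, gP, Nat.succ_eq_add_one, Nat.add_sub_cancel]
  simp only [fgAux]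

end AuxConcrete

/-- For every parameter `z` and every `n ≥ 1`, in `H_z` we have
`[Δⁿ, x] = (f_n(Δ)h + g_n(Δ))x + 2f_n(Δ)ey` and
`[Δⁿ, y] = 2f_n(Δ)fx + (g_n(Δ) − f_n(Δ)h)y`. -/
theorem casimir_power_commutators [IsAlgClosed k] [CharZero k]
    (p : Polynomial k) (n : ℕ) (hn : 1 ≤ n) :
    ΔH k p ^ n * xH k p - xH k p * ΔH k p ^ n
      = (Polynomial.aeval (ΔH k p) (fP k n) * hH k p
          + Polynomial.aeval (ΔH k p) (gP k n)) * xH k p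
        + 2 * Polynomial.aeval (ΔH k p) (fP k n) * (eH k p * yH k p) ∧
    ΔH k p ^ n * yH k p - yH k p * ΔH k p ^ n
      = 2 * Polynomial.aeval (ΔH k p) (fP k n) * (fH k p * xH k p)
        + (Polynomial.aeval (ΔH k p) (gP k n)
            - Polynomial.aeval (ΔH k p) (fP k n) * hH k p) * yH k p := by
  have hd := deltaDef (k := k) (p := p)
  induction n, hn using Nat.le_induction with
  | base =>
      have hfp : Polynomial.aeval (ΔH k p) (fP k 1) = (2 : Hecke k p) := by
        simp only [fP, Nat.sub_self, fgAux, Polynomial.aeval_C, map_ofNat]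
      have hgp : Polynomial.aeval (ΔH k p) (gP k 1) = (-3 : Hecke k p) := by
        simp only [gP, Nat.sub_self, fgAux, Polynomial.aeval_C, map_neg, map_ofNat]
      rw [pow_one, hfp, hgp]
      exact absBase relHE relHF relFE relXE relYE relXF relYF relXH relYH hd
  | succ n hn ih =>
      set d := ΔH k p with hdd
      set F := Polynomial.aeval d (fP k n) with hF
      set G := Polynomial.aeval d (gP k n) with hG
      have cdF : Commute d F := (commute_aeval (Commute.refl d) _).symm
      have cdG : Commute d G := (commute_aeval (Commute.refl d) _).symm
      have hfp : Polynomial.aeval d (fP k (n+1)) = (2:Hecke k p)*(d^n) + (d-1)*F - 2*G := by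
        rw [fP_succ n hn]
        simp only [map_add, map_sub, map_mul, map_pow, map_ofNat, map_one, Polynomial.aeval_X,
          hF, hG]
      have hgp : Polynomial.aeval d (gP k (n+1))
          = (-3:Hecke k p)*(d^n) + (d+3)*G - 2*d*F := by
        rw [gP_succ n hn]
        simp only [map_add, map_sub, map_mul, map_pow, map_ofNat, map_one, map_neg,
          Polynomial.aeval_X, hF, hG]
      rw [hfp, hgp, pow_succ']
      exact absStep relHE relHF relFE relXE relYE relXF relYF relXH relYH hd
        (commDE.pow_left n).eq.symm (commDF.pow_left n).eq.symm (commDH.pow_left n).eq.symm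
        ((commute_aeval commDE (fP k n)).eq.symm)
        ((commute_aeval commDF (fP k n)).eq.symm)
        ((commute_aeval commDH (fP k n)).eq.symm)
        ((cdF.pow_left n).eq)
        ((commute_aeval commDE (gP k n)).eq.symm)
        ((commute_aeval commDF (gP k n)).eq.symm)
        ((commute_aeval commDH (gP k n)).eq.symm)
        ((cdG.pow_left n).eq)
        ((commute_aeval cdF (gP k n)).eq)
        ih.1 ih.2


end InfHecke

end
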